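/- Fuchs' tree identity for Bernoulli numbers: consider the binary tree with root (1), where a node (a₁,…,a_r) has left child (1, a₁,…,a_r) and right child (a₁+1, a₂,…,a_r). Assigning to node (a₁,…,a_r) the value ∏_{i=1}^{r} (−1)/( (a_i + 1)! ), the sum of the values over all nodes at level k equals B_k/k! for every k ≥ 1. -/

import Mathlib

/- STATEMENT 14 (Fuchs' tree): the binary tree has root (1) at level 1; a node
(a₁,…,a_r) has children (1, a₁,…,a_r) and (a₁+1, a₂,…,a_r).  Assigning to a node
(a₁,…,a_r) the value ∏_i (−1)/(a_i+1)!, the sum of the values over the nodes at level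
k equals B_k/k! for every k ≥ 1. -/

/-- The two children of a node (a₁,…,a_r). -/
def fuchsChildren : List ℕ → List (List ℕ)
  | [] => []
  | a :: rest => [1 :: a :: rest, (a + 1) :: rest]

/-- The nodes at each level: level 1 is the root (1). -/
def fuchsLevel : ℕ → List (List ℕ)
  | 0 => []
  | 1 => [[1]]
  | n + 1 => (fuchsLevel n).flatMap fuchsChildren

/-- The value ∏_{i=1}^{r} (−1)/((a_i + 1)!) of a node. -/
def fuchsValue (N : List ℕ) : ℚ :=
  (N.map fun a => -(((a + 1).factorial : ℚ))⁻¹).prod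

namespace FuchsAux

open List

/-- The list of compositions of `n`, organized by first part. -/
def comps : ℕ → List (List ℕ)
  | 0 => [[]]
  | n + 1 => (List.range (n+1)).flatMap fun a => (comps (n - a)).map ((a+1) :: ·)
  decreasing_by exact Nat.lt_succ_of_le (Nat.sub_le n a)

lemma comps_succ (n : ℕ) :
    comps (n+1) = (List.range (n+1)).flatMap fun a => (comps (n - a)).map ((a+1) :: ·) := by
  rw [comps]

lemma comps_succ_succ (m : ℕ) :
    comps (m+2) = (comps (m+1)).map (1 :: ·)
      ++ (List.range (m+1)).flatMap (fun a => (comps (m - a)).map ((a+2) :: ·)) := by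
  rw [comps_succ (m+1), List.range_succ_eq_map, List.flatMap_cons, List.flatMap_map]
  have e : (fun a => List.map (fun x => (a + 1 + 1) :: x) (comps (m + 1 - (a + 1))))
      = fun a : ℕ => List.map (fun x => (a + 2) :: x) (comps (m - a)) := by
    funext a
    have e1 : m + 1 - (a + 1) = m - a := by omega
    have e2 : a + 1 + 1 = a + 2 := by omega
    rw [e1, e2]
  rw [e]
  norm_num

lemma step (m : ℕ) : (comps (m+1)).flatMap fuchsChildren ~ comps (m+2) := by
  rw [comps_succ_succ, comps_succ m, List.flatMap_assoc]
  have h1 : ∀ a : ℕ, ((comps (m - a)).map ((a+1) :: ·)).flatMap fuchsChildren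
      ~ (comps (m - a)).map (fun L => 1 :: (a+1) :: L) ++ (comps (m - a)).map ((a+2) :: ·) := by
    intro a
    rw [List.flatMap_map]
    have h := (List.flatMap_append_perm (comps (m-a))
      (fun L => [1 :: (a+1) :: L]) (fun L => [(a+2) :: L])).symm
    simpa [fuchsChildren, List.map_eq_flatMap] using h
  calc (List.range (m+1)).flatMap
        (fun a => ((comps (m-a)).map ((a+1) :: ·)).flatMap fuchsChildren)
      ~ (List.range (m+1)).flatMap (fun a =>
          (comps (m-a)).map (fun L => 1 :: (a+1) :: L) ++ (comps (m-a)).map ((a+2) :: ·)) :=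
        List.Perm.flatMap_left _ (fun a _ => h1 a)
    _ ~ (List.range (m+1)).flatMap (fun a => (comps (m-a)).map (fun L => 1 :: (a+1) :: L))
          ++ (List.range (m+1)).flatMap (fun a => (comps (m-a)).map ((a+2) :: ·)) :=
        (List.flatMap_append_perm _ _ _).symm
    _ = (((List.range (m+1)).flatMap fun a => (comps (m - a)).map ((a+1) :: ·)).map (1 :: ·))
          ++ (List.range (m+1)).flatMap (fun a => (comps (m-a)).map ((a+2) :: ·)) := by
        rw [List.map_flatMap]
        simp [List.map_map, Function.comp_def]

lemma level_perm : ∀ n : ℕ, fuchsLevel (n+1) ~ comps (n+1)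
  | 0 => by simp [fuchsLevel, comps_succ, comps, List.range_succ]
  | n+1 => by
    have : fuchsLevel (n+2) = (fuchsLevel (n+1)).flatMap fuchsChildren := rfl
    rw [this]
    exact ((level_perm n).flatMap_right fuchsChildren).trans (step n)

lemma value_cons (a : ℕ) (L : List ℕ) :
    fuchsValue (a :: L) = -(((a + 1).factorial : ℚ))⁻¹ * fuchsValue L := by
  simp [fuchsValue]

lemma list_sum_flatMap {α : Type*} (l : List α) (f : α → List ℚ) :
    (l.flatMap f).sum = (l.map fun x => (f x).sum).sum := by
  induction l with | nil => simp | cons a l ih => simp [ih]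

lemma list_sum_range (n : ℕ) (f : ℕ → ℚ) :
    ((List.range n).map f).sum = ∑ i ∈ Finset.range n, f i := by
  induction n with
  | zero => simp
  | succ n ih => rw [Finset.sum_range_succ, List.range_succ]; simp [ih]

/-- The sum of the values of the compositions of `n`. -/
def S (n : ℕ) : ℚ := ((comps n).map fuchsValue).sum

lemma S_zero : S 0 = 1 := by simp [S, comps, fuchsValue]

lemma S_succ (n : ℕ) :
    S (n+1) = ∑ a ∈ Finset.range (n+1), -(((a + 2).factorial : ℚ))⁻¹ * S (n - a) := by
  rw [S, comps_succ, List.map_flatMap, list_sum_flatMap, ← list_sum_range]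
  congr 1
  apply List.map_congr_left
  intro a _
  rw [List.map_map]
  have : (fuchsValue ∘ ((a+1) :: ·)) = fun L => -(((a + 2).factorial : ℚ))⁻¹ * fuchsValue L := by
    funext L; exact value_cons (a+1) L
  rw [this]
  rw [show ((fun L => -(((a + 2).factorial : ℚ))⁻¹ * fuchsValue L)) = (fun L => (-(((a + 2).factorial : ℚ))⁻¹) * fuchsValue L) from rfl]
  rw [List.sum_map_mul_left]
  rfl

lemma bernoulli_rec (n : ℕ) :
    ∑ k ∈ Finset.range (n+1), -((((n+2-k).factorial : ℚ))⁻¹) * (bernoulli k / (k.factorial : ℚ))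
      = bernoulli (n+1) / ((n+1).factorial : ℚ) := by
  have h := sum_bernoulli (n+2)
  rw [if_neg (by omega)] at h
  rw [Finset.sum_range_succ] at h
  have hch : (((n+2).choose (n+1)) : ℚ) = (n : ℚ) + 2 := by
    rw [Nat.choose_succ_self_right]; push_cast; ring
  have hfne : ((n+2).factorial : ℚ) ≠ 0 := by positivity
  apply mul_right_cancel₀ hfne
  rw [Finset.sum_mul]
  have hterm : ∀ k ∈ Finset.range (n+1),
      (-((((n+2-k).factorial : ℚ))⁻¹) * (bernoulli k / (k.factorial : ℚ))) * ((n+2).factorial : ℚ)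
        = -((((n+2).choose k : ℚ)) * bernoulli k) := by
    intro k hk
    have hk' : k ≤ n + 2 := by simp at hk; omega
    have key : (((n+2).choose k : ℚ) * (k.factorial : ℚ) * (((n+2-k).factorial : ℚ)))
        = ((n+2).factorial : ℚ) := by
      exact_mod_cast congrArg (Nat.cast : ℕ → ℚ) (Nat.choose_mul_factorial_mul_factorial hk')
    have h1 : (k.factorial : ℚ) ≠ 0 := by positivity
    have h2 : (((n+2-k).factorial : ℚ)) ≠ 0 := by positivity
    field_simp
    linear_combination (bernoulli k) * key
  rw [Finset.sum_congr rfl hterm]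
  have hfac : ((n+2).factorial : ℚ) = ((n : ℚ) + 2) * ((n+1).factorial : ℚ) := by
    rw [show n + 2 = (n+1) + 1 from rfl, Nat.factorial_succ]
    push_cast; ring
  have hne : ((n+1).factorial : ℚ) ≠ 0 := by positivity
  rw [Finset.sum_neg_distrib]
  rw [hch] at h
  have hrhs : bernoulli (n+1) / ((n+1).factorial : ℚ) * ((n+2).factorial : ℚ)
      = ((n : ℚ) + 2) * bernoulli (n+1) := by
    rw [hfac]; field_simp
  rw [hrhs]
  linarith [h]

lemma S_eq : ∀ n : ℕ, S n = bernoulli n / (n.factorial : ℚ) := by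
  intro n
  induction n using Nat.strong_induction_on with
  | _ n ih =>
    match n with
    | 0 => simp [S_zero]
    | n + 1 =>
      rw [S_succ]
      have hsum : ∀ a ∈ Finset.range (n+1),
          -(((a + 2).factorial : ℚ))⁻¹ * S (n - a)
            = -(((a + 2).factorial : ℚ))⁻¹ * (bernoulli (n-a) / ((n-a).factorial : ℚ)) := by
        intro a ha
        rw [ih (n - a) (by simp at ha; omega)]
      rw [Finset.sum_congr rfl hsum]
      rw [← bernoulli_rec n, ← Finset.sum_range_reflect]
      apply Finset.sum_congr rfl
      intro a ha
      simp only [Finset.mem_range] at ha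
      simp only [Nat.add_sub_cancel]
      rw [show n - (n - a) = a from by omega, show n - a + 2 = n + 2 - a from by omega]

end FuchsAux

theorem fuchs_tree_bernoulli :
    ∀ k : ℕ, 1 ≤ k →
      ((fuchsLevel k).map fuchsValue).sum = bernoulli k / (k.factorial : ℚ) := by
  intro k hk
  obtain ⟨n, rfl⟩ : ∃ n, k = n + 1 := ⟨k - 1, by omega⟩
  rw [((FuchsAux.level_perm n).map fuchsValue).sum_eq]
  exact FuchsAux.S_eq (n+1)
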